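/- arXiv:1704.02177 — 5 statements merged into one kernel-verified Lean document; each statement's English description precedes it below -/
import Mathlib

section
/- Let C be a strictly upper triangular n×n matrix over ℤ/2. For 1 ≤ j < k ≤ n let C_{jk} be the n×n matrix whose j-th and k-th rows equal the j-th and k-th rows of C and whose other rows are zero. Then C satisfies the spin conditions (all row sums ≡ 0 mod 2, and for all 1 ≤ a < b ≤ n, ∑_{r=1}^n c_{a,r}c_{b,r} + c_{a,b}·∑_{r<s} c_{b,r}c_{b,s} ≡ 0 mod 2) if and only if C_{jk} satisfies these spin conditions for every 1 ≤ j < k ≤ n. -/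
open Finset

/-- The spin conditions on a Bott matrix: all row sums vanish mod 2, and for every
pair of indices `a < b`, `∑ r, c_{a,r} c_{b,r} + c_{a,b} · ∑_{r<s} c_{b,r} c_{b,s} = 0`. -/
def SpinCond {n : ℕ} (C : Matrix (Fin n) (Fin n) (ZMod 2)) : Prop :=
  (∀ i : Fin n, ∑ j : Fin n, C i j = 0) ∧
  (∀ a b : Fin n, a < b →
    (∑ r : Fin n, C a r * C b r) +
      C a b * ∑ r : Fin n, ∑ s ∈ univ.filter (fun s => r < s), C b r * C b s = 0)

theorem stmt3 (n : ℕ) (C : Matrix (Fin n) (Fin n) (ZMod 2))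
    (hC : ∀ i j : Fin n, j ≤ i → C i j = 0) :
    SpinCond C ↔
      ∀ j k : Fin n, j < k →
        SpinCond (fun a b => if a = j ∨ a = k then C a b else 0) := by
  constructor
  · rintro ⟨h1, h2⟩ j k hjk
    constructor
    · intro i
      by_cases hi : i = j ∨ i = k
      · simpa [hi] using h1 i
      · simp [hi]
    · intro a b hab
      by_cases ha : a = j ∨ a = k
      · by_cases hb : b = j ∨ b = k
        · simpa [ha, hb] using h2 a b hab
        · simp [hb]
      · simp [ha]
  · intro h
    constructor
    · intro i
      match n, i with
      | 1, i =>
        have : i = 0 := Subsingleton.elim _ _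
        simpa [this] using hC 0 0 le_rfl
      | (m+2), i =>
        by_cases h0 : i = 0
        · have hlt : (0 : Fin (m+2)) < Fin.last (m+1) := by
            simp [Fin.lt_def]
          have := (h 0 (Fin.last (m+1)) hlt).1 0
          simpa [h0] using this
        · have hlt : (0 : Fin (m+2)) < i := by
            exact Fin.pos_iff_ne_zero.mpr h0
          have := (h 0 i hlt).1 i
          simpa using this
    · intro a b hab
      have := (h a b hab).2 a b hab
      simpa using this
end

section
/- Let B = P C P⁻¹ where P is a permutation matrix and C is strictly upper triangular over ℤ/2. Then C satisfies the conditions '∑_j c_{i,j} = 0 for all i, and ∑_r c_{j,r}c_{k,r} + c_{j,k}·∑_{r<s} c_{k,r}c_{k,s} = 0 for all pairs j ≠ k' if and only if B satisfies the same conditions (with b in place of c). -/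
open Finset Matrix

private lemma pairsum_key (n : ℕ) (b : Fin n → ZMod 2) :
    ∑ r : Fin n, ∑ s ∈ univ.filter (fun s => r < s), b r * b s
      = ∑ p ∈ (univ ×ˢ univ).filter (fun p : Fin n × Fin n => p.1 < p.2), b p.1 * b p.2 := by
  rw [Finset.sum_filter, Finset.sum_product]
  simp [Finset.sum_filter]

private lemma pairsum (n : ℕ) (τ : Equiv.Perm (Fin n)) (a : Fin n → ZMod 2) :
    ∑ r : Fin n, ∑ s ∈ univ.filter (fun s => r < s), a (τ r) * a (τ s)
      = ∑ r : Fin n, ∑ s ∈ univ.filter (fun s => r < s), a r * a s := by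
  rw [pairsum_key n (fun r => a (τ r)), pairsum_key n a]
  refine Finset.sum_nbij'
    (i := fun p : Fin n × Fin n => if τ p.1 < τ p.2 then (τ p.1, τ p.2) else (τ p.2, τ p.1))
    (j := fun q : Fin n × Fin n => if τ⁻¹ q.1 < τ⁻¹ q.2 then (τ⁻¹ q.1, τ⁻¹ q.2) else (τ⁻¹ q.2, τ⁻¹ q.1))
    ?_ ?_ ?_ ?_ ?_
  · intro p hp
    simp only [Finset.mem_filter, Finset.mem_product, Finset.mem_univ, true_and] at hp ⊢
    split_ifs with h
    · exact h
    · rcases lt_or_gt_of_ne (fun he => hp.ne (τ.injective he)) with h' | h'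
      · exact absurd h' h
      · exact h'
  · intro q hq
    simp only [Finset.mem_filter, Finset.mem_product, Finset.mem_univ, true_and] at hq ⊢
    split_ifs with h
    · exact h
    · rcases lt_or_gt_of_ne (fun he => hq.ne (τ⁻¹.injective he)) with h' | h'
      · exact absurd h' h
      · exact h'
  · intro p hp
    simp only [Finset.mem_filter, Finset.mem_product, Finset.mem_univ, true_and] at hp
    split_ifs with h h2 h2 <;> simp_all <;> omega
  · intro q hq
    simp only [Finset.mem_filter, Finset.mem_product, Finset.mem_univ, true_and] at hq
    split_ifs with h h2 h2 <;> simp_all <;> omega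
  · intro p hp
    simp only [Finset.mem_filter, Finset.mem_product, Finset.mem_univ, true_and] at hp
    split_ifs with h
    · rfl
    · exact mul_comm _ _

private def Cond (n : ℕ) (D : Matrix (Fin n) (Fin n) (ZMod 2)) : Prop :=
  (∀ i : Fin n, ∑ j : Fin n, D i j = 0) ∧
    (∀ j k : Fin n, j ≠ k →
      (∑ r : Fin n, D j r * D k r) +
        D j k * ∑ r : Fin n, ∑ s ∈ univ.filter (fun s => r < s), D k r * D k s = 0)

private lemma cond_perm (n : ℕ) (τ : Equiv.Perm (Fin n))
    (D E : Matrix (Fin n) (Fin n) (ZMod 2))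
    (hE : ∀ i j : Fin n, E i j = D (τ i) (τ j)) (hD : Cond n D) : Cond n E := by
  obtain ⟨h1, h2⟩ := hD
  constructor
  · intro i
    calc ∑ j, E i j = ∑ j, D (τ i) (τ j) := by simp [hE]
      _ = ∑ j, D (τ i) j := Equiv.sum_comp τ _
      _ = 0 := h1 _
  · intro j k hjk
    have hne : τ j ≠ τ k := fun he => hjk (τ.injective he)
    have key := h2 (τ j) (τ k) hne
    calc (∑ r, E j r * E k r) + E j k * ∑ r, ∑ s ∈ univ.filter (fun s => r < s), E k r * E k s
        = (∑ r, D (τ j) (τ r) * D (τ k) (τ r)) +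
            D (τ j) (τ k) * ∑ r, ∑ s ∈ univ.filter (fun s => r < s), D (τ k) (τ r) * D (τ k) (τ s) := by
          simp [hE]
      _ = (∑ r, D (τ j) r * D (τ k) r) +
            D (τ j) (τ k) * ∑ r, ∑ s ∈ univ.filter (fun s => r < s), D (τ k) r * D (τ k) s := by
          rw [Equiv.sum_comp τ (fun r => D (τ j) r * D (τ k) r), pairsum n τ (fun r => D (τ k) r)]
      _ = 0 := key

theorem stmt5 (n : ℕ) (σ : Equiv.Perm (Fin n))
    (C B P : Matrix (Fin n) (Fin n) (ZMod 2))
    (hC : ∀ i j : Fin n, j ≤ i → C i j = 0)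
    (hP : P = Matrix.of fun i j => if i = σ j then (1 : ZMod 2) else 0)
    (hB : B = P * C * P⁻¹) :
    ((∀ i : Fin n, ∑ j : Fin n, C i j = 0) ∧
      (∀ j k : Fin n, j ≠ k →
        (∑ r : Fin n, C j r * C k r) +
          C j k * ∑ r : Fin n, ∑ s ∈ univ.filter (fun s => r < s), C k r * C k s = 0))
    ↔
    ((∀ i : Fin n, ∑ j : Fin n, B i j = 0) ∧
      (∀ j k : Fin n, j ≠ k →
        (∑ r : Fin n, B j r * B k r) +
          B j k * ∑ r : Fin n, ∑ s ∈ univ.filter (fun s => r < s), B k r * B k s = 0)) := by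
  -- P⁻¹ = Pᵀ
  have hPPt : P * Pᵀ = 1 := by
    ext i j
    simp only [hP, Matrix.mul_apply, Matrix.transpose_apply, Matrix.of_apply]
    rw [Finset.sum_eq_single (σ⁻¹ i)]
    · by_cases h : i = j <;>
        simp [h, Equiv.eq_symm_apply, Matrix.one_apply, eq_comm]
    · intro b _ hb
      have : i ≠ σ b := fun he => hb (by simp [he])
      simp [this]
    · simp
  have hPinv : P⁻¹ = Pᵀ := Matrix.inv_eq_right_inv hPPt
  have hBapp : ∀ i j : Fin n, B i j = C (σ⁻¹ i) (σ⁻¹ j) := by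
    intro i j
    rw [hB, hPinv]
    simp only [Matrix.mul_apply, Matrix.transpose_apply, hP, Matrix.of_apply]
    rw [Finset.sum_eq_single (σ⁻¹ j)]
    · rw [Finset.sum_eq_single (σ⁻¹ i)]
      · simp
      · intro b _ hb
        have : i ≠ σ b := fun he => hb (by simp [he])
        simp [this]
      · simp
    · intro b _ hb
      have : j ≠ σ b := fun he => hb (by simp [he])
      simp [this]
    · simp
  constructor
  · intro h
    exact cond_perm n σ⁻¹ C B (fun i j => hBapp i j) h
  · intro h
    refine cond_perm n σ B C (fun i j => ?_) h
    rw [hBapp]; simp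
end

section
/- Let C be a strictly upper triangular n×n matrix over ℤ/2 satisfying the spin conditions (row sums 0 mod 2, and for all j < k, ∑_r c_{j,r}c_{k,r} + c_{j,k}·∑_{r<s}c_{k,r}c_{k,s} = 0 mod 2). Then for any 1 ≤ m < n, the (n−m)×(n−m) submatrix C^m obtained by deleting the first m rows and columns of C also satisfies the spin conditions. -/
set_option maxHeartbeats 1000000


open Finset

lemma sum_shift {n m : ℕ} (hmn : m < n) (f : Fin n → ZMod 2)
    (h0 : ∀ j : Fin n, j.val < m → f j = 0) :
    ∑ j : Fin (n - m), f ⟨m + j.val, by have := j.isLt; omega⟩ = ∑ j : Fin n, f j := by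
  rw [← Finset.sum_filter_of_ne (p := fun j : Fin n => m ≤ j.val)
    (fun x _ hx => by by_contra h; exact hx (h0 x (by omega)))]
  refine Finset.sum_nbij' (fun j : Fin (n - m) => (⟨m + j.val, by have := j.isLt; omega⟩ : Fin n))
    (fun j : Fin n => (⟨j.val - m, by have := j.isLt; omega⟩ : Fin (n - m)))
    ?_ ?_ ?_ ?_ ?_
  · intro a _; simp
  · intro a _; simp
  · intro a _; ext; simp
  · intro a ha
    simp only [mem_filter, mem_univ, true_and] at ha
    ext; simp; omega
  · intro a _; rfl

theorem stmt14 (n : ℕ) (C : Matrix (Fin n) (Fin n) (ZMod 2))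
    (hC : ∀ i j : Fin n, j ≤ i → C i j = 0)
    (hspin : SpinCond C) :
    ∀ m : ℕ, 1 ≤ m → m < n →
      SpinCond (n := n - m) (fun i j =>
        C ⟨m + i.val, by have := i.isLt; omega⟩ ⟨m + j.val, by have := j.isLt; omega⟩) := by
  intro m _ hmn
  obtain ⟨h1, h2⟩ := hspin
  constructor
  · intro i
    have i' : Fin n := ⟨m + i.val, by have := i.isLt; omega⟩
    have hs := sum_shift hmn (f := fun j => C ⟨m + i.val, by have := i.isLt; omega⟩ j)
      (fun j hj => hC _ _ (Fin.le_def.mpr (by simp; omega)))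
    exact hs.trans (h1 _)
  · intro a b hab
    set a' : Fin n := ⟨m + a.val, by have := a.isLt; omega⟩ with ha'
    set b' : Fin n := ⟨m + b.val, by have := b.isLt; omega⟩ with hb'
    have hab' : a' < b' := by
      rw [Fin.lt_def] at hab ⊢; simp [ha', hb']; omega
    have e1 : ∑ r : Fin (n - m),
        C a' ⟨m + r.val, by have := r.isLt; omega⟩ * C b' ⟨m + r.val, by have := r.isLt; omega⟩
        = ∑ r : Fin n, C a' r * C b' r := by
      refine sum_shift hmn (f := fun r => C a' r * C b' r) (fun j hj => ?_)
      show C a' j * C b' j = 0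
      rw [hC a' j (Fin.le_def.mpr (by simp [ha']; omega))]; ring
    have e2 : ∑ r : Fin (n - m), ∑ s ∈ univ.filter (fun s : Fin (n - m) => r < s),
        C b' ⟨m + r.val, by have := r.isLt; omega⟩ * C b' ⟨m + s.val, by have := s.isLt; omega⟩
        = ∑ r : Fin n, ∑ s ∈ univ.filter (fun s => r < s), C b' r * C b' s := by
      have hs := sum_shift hmn
        (f := fun r : Fin n => ∑ s ∈ univ.filter (fun s => r < s), C b' r * C b' s)
        (fun j hj => by
          show ∑ s ∈ univ.filter (fun s => j < s), C b' j * C b' s = 0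
          rw [hC b' j (Fin.le_def.mpr (by simp [hb']; omega))]
          simp)
      refine Eq.trans ?_ hs
      refine Finset.sum_congr rfl (fun r _ => ?_)
      show ∑ s ∈ univ.filter (fun s : Fin (n - m) => r < s),
          C b' ⟨m + r.val, by have := r.isLt; omega⟩ * C b' ⟨m + s.val, by have := s.isLt; omega⟩
        = ∑ s ∈ univ.filter (fun s : Fin n =>
            (⟨m + r.val, by have := r.isLt; omega⟩ : Fin n) < s),
          C b' ⟨m + r.val, by have := r.isLt; omega⟩ * C b' s
      refine Finset.sum_nbij' (fun s : Fin (n - m) => (⟨m + s.val, by have := s.isLt; omega⟩ : Fin n))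
        (fun s : Fin n => (⟨s.val - m, by have := s.isLt; omega⟩ : Fin (n - m)))
        ?_ ?_ ?_ ?_ ?_
      · intro s hs
        simp only [mem_filter, mem_univ, true_and, Fin.lt_def] at hs ⊢
        omega
      · intro s hs
        simp only [mem_filter, mem_univ, true_and, Fin.lt_def] at hs ⊢
        omega
      · intro s _; ext; simp
      · intro s hs
        simp only [mem_filter, mem_univ, true_and, Fin.lt_def] at hs
        ext; simp; omega
      · intro s _; rfl
    show (∑ r : Fin (n - m), C a' ⟨m + r.val, by have := r.isLt; omega⟩ *
          C b' ⟨m + r.val, by have := r.isLt; omega⟩) +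
        C a' b' * ∑ r : Fin (n - m), ∑ s ∈ univ.filter (fun s : Fin (n - m) => r < s),
          C b' ⟨m + r.val, by have := r.isLt; omega⟩ * C b' ⟨m + s.val, by have := s.isLt; omega⟩ = 0
    exact (congrArg₂ (fun x y => x + C a' b' * y) e1 e2).trans (h2 a' b' hab')
end

section
/- Let R = (ℤ/2)[x_1,…,x_{2n}] and I the ideal generated by x_j x_{n+j} (1 ≤ j ≤ n), x_1 + x_{n+1}, and x_j + x_{n+j} + ∑_{i=1}^{j-1} c_{i,j} x_{n+i} for 2 ≤ j ≤ n, where C is strictly upper triangular over ℤ/2. Then in R/I the equality ∏_{i=1}^{2n}(1 + x_i) = ∏_{j=2}^{n} (1 + ∑_{i=1}^{j-1} c_{i,j} x_{n+i}) holds. -/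
open Finset MvPolynomial

/-- The ideal of relations presenting `H^*(Y_n(C); ℤ/2)`; indices `0`-based. -/
noncomputable def bottIdeal (n : ℕ) (A : Matrix (Fin n) (Fin n) (ZMod 2)) :
    Ideal (MvPolynomial (Fin (2 * n)) (ZMod 2)) :=
  Ideal.span
    ((Set.range fun j : Fin n =>
        X (⟨j.val, by have := j.isLt; omega⟩ : Fin (2 * n)) *
          X ⟨n + j.val, by have := j.isLt; omega⟩) ∪
     (Set.range fun j : Fin n =>
        X (⟨j.val, by have := j.isLt; omega⟩ : Fin (2 * n)) +
          X ⟨n + j.val, by have := j.isLt; omega⟩ +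
          ∑ i ∈ univ.filter (fun i => i < j),
            C (A i j) * X ⟨n + i.val, by have := i.isLt; omega⟩))

theorem stmt18 (n : ℕ) (A : Matrix (Fin n) (Fin n) (ZMod 2))
    (hA : ∀ i j : Fin n, j ≤ i → A i j = 0) :
    (∏ i : Fin (2 * n), ((1 : MvPolynomial (Fin (2 * n)) (ZMod 2)) + X i)) -
      ∏ j ∈ univ.filter (fun j : Fin n => 0 < j.val),
        (1 + ∑ i ∈ univ.filter (fun i => i < j),
          C (A i j) * X (⟨n + i.val, by have := i.isLt; omega⟩ : Fin (2 * n)))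
      ∈ bottIdeal n A := by
  classical
  set I := bottIdeal n A with hI
  rw [← Ideal.Quotient.eq]
  set q := Ideal.Quotient.mk I with hq
  set S : Fin n → MvPolynomial (Fin (2 * n)) (ZMod 2) := fun j =>
    ∑ i ∈ univ.filter (fun i => i < j),
      C (A i j) * X (⟨n + i.val, by have := i.isLt; omega⟩ : Fin (2 * n)) with hS
  have hR : (1 : MvPolynomial (Fin (2 * n)) (ZMod 2)) + 1 = 0 := by
    have h : ((1 : ZMod 2) + 1) = 0 := by decide
    calc (1 : MvPolynomial (Fin (2 * n)) (ZMod 2)) + 1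
        = C ((1 : ZMod 2) + 1) := by rw [map_add, C_1]
      _ = 0 := by rw [h, map_zero]
  have htwo : (1 : MvPolynomial (Fin (2 * n)) (ZMod 2) ⧸ I) + 1 = 0 := by
    rw [← map_one q, ← map_add, hR, map_zero]
  have hrel1 : ∀ j : Fin n,
      q (X (⟨j.val, by have := j.isLt; omega⟩ : Fin (2 * n))) *
        q (X ⟨n + j.val, by have := j.isLt; omega⟩) = 0 := by
    intro j
    rw [← map_mul]
    apply Ideal.Quotient.eq_zero_iff_mem.mpr
    exact Ideal.subset_span (Or.inl ⟨j, rfl⟩)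
  have hrel2 : ∀ j : Fin n,
      q (X (⟨j.val, by have := j.isLt; omega⟩ : Fin (2 * n))) +
        q (X ⟨n + j.val, by have := j.isLt; omega⟩) + q (S j) = 0 := by
    intro j
    rw [← map_add, ← map_add]
    apply Ideal.Quotient.eq_zero_iff_mem.mpr
    exact Ideal.subset_span (Or.inr ⟨j, rfl⟩)
  have key : ∀ j : Fin n,
      (1 + q (X (⟨j.val, by have := j.isLt; omega⟩ : Fin (2 * n)))) *
        (1 + q (X ⟨n + j.val, by have := j.isLt; omega⟩)) = 1 + q (S j) := by
    intro j
    have h1 := hrel1 j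
    have h2 := hrel2 j
    linear_combination h1 + h2 - q (S j) * htwo
  calc q (∏ i : Fin (2 * n), (1 + X i))
      = ∏ i : Fin (2 * n), (1 + q (X i)) := by
        rw [map_prod]; simp
    _ = ∏ x : Fin n ⊕ Fin n,
          (1 + q (X ((finSumFinEquiv.trans (finCongr (two_mul n).symm)) x))) :=
        (Equiv.prod_comp _ _).symm
    _ = ∏ j : Fin n,
          ((1 + q (X (⟨j.val, by have := j.isLt; omega⟩ : Fin (2 * n)))) *
           (1 + q (X ⟨n + j.val, by have := j.isLt; omega⟩))) := by
        rw [Fintype.prod_sum_type, ← Finset.prod_mul_distrib]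
        apply Finset.prod_congr rfl
        intro j _
        have hl : (finSumFinEquiv.trans (finCongr (two_mul n).symm)) (Sum.inl j)
            = (⟨j.val, by have := j.isLt; omega⟩ : Fin (2 * n)) := by
          apply Fin.ext; simp
        have hr : (finSumFinEquiv.trans (finCongr (two_mul n).symm)) (Sum.inr j)
            = (⟨n + j.val, by have := j.isLt; omega⟩ : Fin (2 * n)) := by
          apply Fin.ext; simp [Nat.add_comm]
        rw [hl, hr]
    _ = ∏ j : Fin n, (1 + q (S j)) := Finset.prod_congr rfl fun j _ => key j
    _ = ∏ j ∈ univ.filter (fun j : Fin n => 0 < j.val), (1 + q (S j)) := by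
        rw [Finset.prod_filter_of_ne]
        intro j _ hne
        by_contra h
        apply hne
        have hj0 : j.val = 0 := by omega
        have : univ.filter (fun i : Fin n => i < j) = ∅ := by
          apply Finset.filter_false_of_mem
          intro i _
          simp [Fin.lt_def, hj0]
        rw [hS]
        simp only [this, Finset.sum_empty, map_zero, add_zero]
    _ = q (∏ j ∈ univ.filter (fun j : Fin n => 0 < j.val), (1 + S j)) := by
        rw [map_prod]; simp
end

section
/- Let R = (ℤ/2)[x_1,…,x_{2n}] with ideal I generated by x_j x_{n+j} (1 ≤ j ≤ n), x_1 + x_{n+1}, and x_j + x_{n+j} + ∑_{i=1}^{j-1} c_{i,j} x_{n+i} for 2 ≤ j ≤ n (C strictly upper triangular over ℤ/2). Then the monomial x_{n+1} x_{n+2} ⋯ x_{n+m-1} x_{n+m}² lies in I for every 1 ≤ m ≤ n−1 (in particular x_{n+1}² ∈ I). -/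
open Finset MvPolynomial

/-- Auxiliary: the variable `x_{n+i}` as a total function of `i : ℕ`. -/
noncomputable def fAux (n i : ℕ) : MvPolynomial (Fin (2 * n)) (ZMod 2) :=
  if h : n + i < 2 * n then X ⟨n + i, h⟩ else 1

lemma fAux_eq (n i : ℕ) (h : i < n) :
    fAux n i = X (⟨n + i, by omega⟩ : Fin (2 * n)) :=
  dif_pos (by omega)

lemma key_aux (n : ℕ) (A : Matrix (Fin n) (Fin n) (ZMod 2)) :
    ∀ k, k < n →
      (∏ i ∈ Finset.range k, fAux n i) * (fAux n k) ^ 2 ∈ bottIdeal n A := by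
  intro k
  induction k using Nat.strong_induction_on with
  | _ k IH =>
    intro hk
    set j : Fin n := ⟨k, hk⟩ with hj
    set Xk : MvPolynomial (Fin (2 * n)) (ZMod 2) := X ⟨k, by omega⟩ with hXk
    set Xnk : MvPolynomial (Fin (2 * n)) (ZMod 2) := X ⟨n + k, by omega⟩ with hXnk
    set S : MvPolynomial (Fin (2 * n)) (ZMod 2) :=
      ∑ i ∈ univ.filter (fun i => i < j),
        C (A i j) * X ⟨n + i.val, by have := i.isLt; omega⟩ with hS
    set Pr : MvPolynomial (Fin (2 * n)) (ZMod 2) :=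
      ∏ i ∈ Finset.range k, fAux n i with hPr
    have hfk : fAux n k = Xnk := fAux_eq n k hk
    have hL : Xk + Xnk + S ∈ bottIdeal n A :=
      Ideal.subset_span (Or.inr ⟨j, rfl⟩)
    have hP : Xk * Xnk ∈ bottIdeal n A :=
      Ideal.subset_span (Or.inl ⟨j, rfl⟩)
    have expand : Pr * (fAux n k) ^ 2 =
        Pr * Xnk * (Xk + Xnk + S) - Pr * Xnk * Xk - Pr * Xnk * S := by
      rw [hfk]; ring
    rw [expand]
    refine Ideal.sub_mem _ (Ideal.sub_mem _ ?_ ?_) ?_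
    · exact Ideal.mul_mem_left _ _ hL
    · have : Pr * Xnk * Xk = Pr * (Xk * Xnk) := by ring
      rw [this]; exact Ideal.mul_mem_left _ _ hP
    · rw [hS, Finset.mul_sum]
      refine Ideal.sum_mem _ ?_
      intro i hi
      have hik : i.val < k := by
        simpa [hj, Fin.lt_def] using (Finset.mem_filter.mp hi).2
      have hin : i.val < n := i.isLt
      have hPrdec : Pr = (∏ t ∈ Finset.range i.val, fAux n t) * fAux n i.val *
          ∏ t ∈ Finset.Ico (i.val + 1) k, fAux n t := by
        rw [hPr, ← Finset.prod_range_mul_prod_Ico (fAux n) (Nat.succ_le_of_lt hik),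
          Finset.prod_range_succ]
      have hXni : (X (⟨n + i.val, by omega⟩ : Fin (2 * n)) :
          MvPolynomial (Fin (2 * n)) (ZMod 2)) = fAux n i.val := (fAux_eq n i.val hin).symm
      have hterm : Pr * Xnk * (C (A i j) * X (⟨n + i.val, by omega⟩ : Fin (2 * n))) =
          ((∏ t ∈ Finset.range i.val, fAux n t) * (fAux n i.val) ^ 2) *
            (C (A i j) * Xnk * ∏ t ∈ Finset.Ico (i.val + 1) k, fAux n t) := by
        rw [hPrdec, hXni]; ring
      rw [hterm]
      exact Ideal.mul_mem_right _ _ (IH i.val hik hin)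

theorem stmt19 (n : ℕ) (A : Matrix (Fin n) (Fin n) (ZMod 2))
    (hA : ∀ i j : Fin n, j ≤ i → A i j = 0) :
    ∀ (m : ℕ) (hm1 : 1 ≤ m) (hm2 : m ≤ n - 1),
      (∏ i : Fin (m - 1),
          X (⟨n + i.val, by have := i.isLt; omega⟩ : Fin (2 * n))) *
        X (⟨n + (m - 1), by omega⟩ : Fin (2 * n)) ^ 2
        ∈ bottIdeal n A := by
  intro m hm1 hm2
  have hmn : m - 1 < n := by omega
  have h1 : (∏ i : Fin (m - 1),
      (X (⟨n + i.val, by have := i.isLt; omega⟩ : Fin (2 * n)) :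
        MvPolynomial (Fin (2 * n)) (ZMod 2))) =
      ∏ i ∈ Finset.range (m - 1), fAux n i := by
    rw [← Fin.prod_univ_eq_prod_range (fun i => fAux n i) (m - 1)]
    exact Finset.prod_congr rfl fun i _ => (fAux_eq n i.val (by omega)).symm
  have h2 : (X (⟨n + (m - 1), by omega⟩ : Fin (2 * n)) :
      MvPolynomial (Fin (2 * n)) (ZMod 2)) = fAux n (m - 1) :=
    (fAux_eq n (m - 1) hmn).symm
  rw [h1, h2]
  exact key_aux n A (m - 1) hmn
end
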